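/- For every real σ > 1, one has σ^σ / (σ-1)^(σ-1) ≤ e·(σ - 1/2). -/

import Mathlib

open Real Filter Set

lemma midlog : ∀ u : ℝ, 0 ≤ u → 2*u/(2+u) ≤ Real.log (1+u) := by
  set φ : ℝ → ℝ := fun u => Real.log (1+u) - 2*u/(2+u) with hφ
  have hder : ∀ u : ℝ, 0 ≤ u → HasDerivAt φ (1/(1+u) - 4/(2+u)^2) u := by
    intro u hu
    have h1 : (0:ℝ) < 1 + u := by linarith
    have h2 : (0:ℝ) < 2 + u := by linarith
    have d1 : HasDerivAt (fun u : ℝ => Real.log (1+u)) (1/(1+u)) u := by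
      have := (Real.hasDerivAt_log h1.ne').comp u ((hasDerivAt_id u).const_add 1)
      simpa [Function.comp_def] using this
    have d2 : HasDerivAt (fun u : ℝ => 2*u/(2+u)) (4/(2+u)^2) u := by
      have := ((hasDerivAt_id u).const_mul 2).div ((hasDerivAt_id u).const_add 2) h2.ne'
      refine this.congr_deriv ?_
      simp only [id]
      field_simp
      ring
    exact d1.sub d2
  have key : MonotoneOn φ (Set.Ici 0) := by
    apply monotoneOn_of_deriv_nonneg (convex_Ici 0)
    · exact fun u hu => ((hder u hu).continuousAt).continuousWithinAt
    · intro u hu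
      rw [interior_Ici] at hu
      exact ((hder u (le_of_lt hu)).differentiableAt).differentiableWithinAt
    · intro u hu
      rw [interior_Ici] at hu
      simp only [Set.mem_Ioi] at hu
      rw [(hder u hu.le).deriv]
      have h1 : (0:ℝ) < 1 + u := by linarith
      have h2 : (0:ℝ) < 2 + u := by linarith
      rw [sub_nonneg, div_le_div_iff₀ (by positivity) h1]
      nlinarith [sq_nonneg u]
  intro u hu
  have := key (Set.self_mem_Ici (a := (0:ℝ))) hu hu
  simp only [hφ] at this
  norm_num at this
  linarith

noncomputable def Gf : ℝ → ℝ := fun x => x * Real.log x - (x-1) * Real.log (x-1)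
  - Real.log (x - 1/2)

lemma Gder : ∀ x : ℝ, 1 < x →
    HasDerivAt Gf (Real.log x - Real.log (x-1) - 1/(x-1/2)) x := by
  intro x hx
  have h0 : (0:ℝ) < x := by linarith
  have h1 : (0:ℝ) < x - 1 := by linarith
  have h2 : (0:ℝ) < x - 1/2 := by linarith
  have d1 : HasDerivAt (fun x : ℝ => x * Real.log x) (Real.log x + 1) x := by
    have := (hasDerivAt_id x).mul (Real.hasDerivAt_log h0.ne')
    refine this.congr_deriv ?_
    simp only [id]
    field_simp
  have d2 : HasDerivAt (fun x : ℝ => (x-1) * Real.log (x-1)) (Real.log (x-1) + 1) x := by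
    have dl : HasDerivAt (fun x : ℝ => Real.log (x-1)) (1/(x-1)) x := by
      have := (Real.hasDerivAt_log h1.ne').comp x ((hasDerivAt_id x).sub_const 1)
      simpa [Function.comp_def] using this
    have := ((hasDerivAt_id x).sub_const 1).mul dl
    refine this.congr_deriv ?_
    simp only [id]
    field_simp
  have d3 : HasDerivAt (fun x : ℝ => Real.log (x - 1/2)) (1/(x-1/2)) x := by
    have := (Real.hasDerivAt_log h2.ne').comp x ((hasDerivAt_id x).sub_const (1/2))
    simpa [Function.comp_def] using this
  have := (d1.sub d2).sub d3
  refine this.congr_deriv ?_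
  ring

lemma Gmono : MonotoneOn Gf (Set.Ioi 1) := by
  apply monotoneOn_of_deriv_nonneg (convex_Ioi 1)
  · intro x hx
    exact ((Gder x hx).continuousAt).continuousWithinAt
  · intro x hx
    rw [interior_Ioi] at hx
    exact ((Gder x hx).differentiableAt).differentiableWithinAt
  · intro x hx
    rw [interior_Ioi] at hx
    simp only [Set.mem_Ioi] at hx
    rw [(Gder x hx).deriv]
    have h0 : (0:ℝ) < x := by linarith
    have h1 : (0:ℝ) < x - 1 := by linarith
    have hp : (0:ℝ) < 1/(x-1) := by positivity
    have hm := midlog (1/(x-1)) hp.le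
    have e1 : Real.log x - Real.log (x-1) = Real.log (1 + 1/(x-1)) := by
      rw [← Real.log_div h0.ne' h1.ne']
      congr 1
      field_simp
      ring
    have e2 : 2*(1/(x-1))/(2+1/(x-1)) = 1/(x-1/2) := by
      have hq : (0:ℝ) < 2 + 1/(x-1) := by linarith
      have h2 : (0:ℝ) < x - 1/2 := by linarith
      rw [div_eq_div_iff hq.ne' h2.ne']
      field_simp
      ring
    rw [e1]
    rw [e2] at hm
    linarith

set_option maxHeartbeats 800000 in
lemma Glim : Filter.Tendsto Gf Filter.atTop (nhds 1) := by
  have h1 : Filter.Tendsto (fun x : ℝ => (x-1) * Real.log (1 + 1/(x-1)))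
      Filter.atTop (nhds 1) := by
    have := (Real.tendsto_mul_log_one_add_div_atTop 1).comp
      (tendsto_atTop_add_const_right Filter.atTop (-1) tendsto_id)
    simpa [Function.comp_def, sub_eq_add_neg] using this
  have h2 : Filter.Tendsto (fun x : ℝ => Real.log (x / (x - 1/2)))
      Filter.atTop (nhds 0) := by
    have hx : Filter.Tendsto (fun x : ℝ => x / (x - 1/2)) Filter.atTop (nhds 1) := by
      have h : Filter.Tendsto (fun x : ℝ => 1 + (1/2) * (x - 1/2)⁻¹) Filter.atTop (nhds 1) := by
        have := (tendsto_inv_atTop_zero.comp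
          (tendsto_atTop_add_const_right Filter.atTop (-(1/2)) tendsto_id)).const_mul (1/2 : ℝ)
        simp only [mul_zero] at this
        simpa [sub_eq_add_neg] using (this.const_add 1)
      apply h.congr'
      filter_upwards [Filter.eventually_gt_atTop (1:ℝ)] with x hx
      have h2 : (0:ℝ) < x - 1/2 := by linarith
      have h4 := mul_inv_cancel₀ h2.ne'
      rw [div_eq_mul_inv]
      linear_combination (-1 : ℝ) * h4
    have := (Real.continuousAt_log (one_ne_zero)).tendsto.comp hx
    simpa [Function.comp_def] using this
  have h3 := h1.add h2
  rw [add_zero] at h3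
  apply h3.congr'
  filter_upwards [Filter.eventually_gt_atTop (1:ℝ)] with x hx
  have h0 : (0:ℝ) < x := by linarith
  have ha : (0:ℝ) < x - 1 := by linarith
  have hb : (0:ℝ) < x - 1/2 := by linarith
  have e1 : Real.log (1 + 1/(x-1)) = Real.log x - Real.log (x-1) := by
    rw [← Real.log_div h0.ne' ha.ne']
    congr 1
    field_simp
    ring
  rw [e1, Real.log_div h0.ne' hb.ne']
  simp only [Gf]
  ring

theorem stmt_1 (σ : ℝ) (hσ : 1 < σ) :
    σ ^ σ / (σ - 1) ^ (σ - 1) ≤ Real.exp 1 * (σ - 1 / 2) := by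
  have h0 : (0:ℝ) < σ := by linarith
  have h1 : (0:ℝ) < σ - 1 := by linarith
  have h2 : (0:ℝ) < σ - 1/2 := by linarith
  have key : σ * Real.log σ - (σ-1) * Real.log (σ-1) - Real.log (σ - 1/2) ≤ 1 := by
    have : Gf σ ≤ 1 := by
      refine ge_of_tendsto Glim ?_
      filter_upwards [Filter.eventually_ge_atTop σ] with y hy
      exact Gmono (Set.mem_Ioi.mpr hσ) (Set.mem_Ioi.mpr (lt_of_lt_of_le hσ hy)) hy
    simpa [Gf] using this
  have lhs : σ ^ σ / (σ - 1) ^ (σ - 1)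
      = Real.exp (σ * Real.log σ - (σ-1) * Real.log (σ-1)) := by
    rw [Real.rpow_def_of_pos h0, Real.rpow_def_of_pos h1, ← Real.exp_sub]
    ring_nf
  have rhs : Real.exp 1 * (σ - 1/2) = Real.exp (1 + Real.log (σ - 1/2)) := by
    rw [Real.exp_add, Real.exp_log h2]
  rw [lhs, rhs, Real.exp_le_exp]
  linarith
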